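/- Let n ≥ 1 and define u : ℝⁿ → ℝ by u(x) = exp(x₁), and let X be the constant vector field e₁ (the first standard basis vector). Then u is positive, nonconstant, and satisfies Δu - X·∇u = 0 on ℝⁿ, while the symmetric part of the Jacobian of X vanishes (so Ric_X = 0 ≥ 0). -/

import Mathlib

/-- The `i`-th partial derivative of `f : ℝⁿ → ℝ` at `x`. -/
noncomputable def partialDeriv {n : ℕ} (f : (Fin n → ℝ) → ℝ) (i : Fin n)
    (x : Fin n → ℝ) : ℝ :=
  fderiv ℝ f x (Pi.single i 1)

lemma hasFDeriv_exp_eval {n : ℕ} (e0 : Fin n) (x : Fin n → ℝ) :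
    HasFDerivAt (fun y : Fin n → ℝ => Real.exp (y e0))
      (Real.exp (x e0) • (ContinuousLinearMap.proj e0 : (Fin n → ℝ) →L[ℝ] ℝ)) x :=
  (Real.hasDerivAt_exp (x e0)).comp_hasFDerivAt (f := ContinuousLinearMap.proj e0) x
    ((ContinuousLinearMap.proj e0 : (Fin n → ℝ) →L[ℝ] ℝ).hasFDerivAt)

lemma pd1 {n : ℕ} (e0 : Fin n) (i : Fin n) (x : Fin n → ℝ) :
    partialDeriv (fun y => Real.exp (y e0)) i x
      = Real.exp (x e0) * ((Pi.single i (1 : ℝ) : Fin n → ℝ) e0) := by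
  rw [partialDeriv, (hasFDeriv_exp_eval e0 x).fderiv]
  simp [ContinuousLinearMap.proj_apply]

lemma pd2 {n : ℕ} (e0 : Fin n) (i j : Fin n) (x : Fin n → ℝ) :
    partialDeriv (fun y => Real.exp (y e0) * ((Pi.single i (1 : ℝ) : Fin n → ℝ) e0)) j x
      = ((Pi.single i (1 : ℝ) : Fin n → ℝ) e0)
        * (Real.exp (x e0) * ((Pi.single j (1 : ℝ) : Fin n → ℝ) e0)) := by
  rw [partialDeriv, ((hasFDeriv_exp_eval e0 x).mul_const _).fderiv]
  simp [ContinuousLinearMap.proj_apply]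

theorem exponential_counterexample (n : ℕ) (hn : 1 ≤ n)
    (u : (Fin n → ℝ) → ℝ) (hu : ∀ x, u x = Real.exp (x ⟨0, hn⟩))
    (X : (Fin n → ℝ) → (Fin n → ℝ)) (hX : ∀ x, X x = Pi.single ⟨0, hn⟩ 1) :
    (∀ x, 0 < u x) ∧
    (∃ x y, u x ≠ u y) ∧
    (∀ x, (∑ i, partialDeriv (fun y => partialDeriv u i y) i x)
        - (∑ j, X x j * partialDeriv u j x) = 0) ∧
    (∀ x, ∀ i j : Fin n,
      partialDeriv (fun y => X y j) i x + partialDeriv (fun y => X y i) j x = 0) := by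
  set e0 : Fin n := ⟨0, hn⟩
  have hu' : u = fun y => Real.exp (y e0) := funext hu
  refine ⟨fun x => by rw [hu]; exact Real.exp_pos _, ?_, ?_, ?_⟩
  · refine ⟨(fun _ => 0), (fun _ => 1), ?_⟩
    rw [hu, hu]
    simp only [Pi.zero_apply, Real.exp_zero]
    intro h
    have := Real.add_one_lt_exp (by norm_num : (1:ℝ) ≠ 0)
    linarith
  · intro x
    have hpd : ∀ i, (fun y => partialDeriv u i y)
        = fun y => Real.exp (y e0) * ((Pi.single i (1 : ℝ) : Fin n → ℝ) e0) := by
      intro i; funext y; rw [hu', pd1]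
    have h1 : ∀ i : Fin n, partialDeriv (fun y => partialDeriv u i y) i x
        = Real.exp (x e0) * ((Pi.single i (1 : ℝ) : Fin n → ℝ) e0)
          * ((Pi.single i (1 : ℝ) : Fin n → ℝ) e0) := by
      intro i; rw [hpd i, pd2]; ring
    have h2 : ∀ j : Fin n, partialDeriv u j x
        = Real.exp (x e0) * ((Pi.single j (1 : ℝ) : Fin n → ℝ) e0) := by
      intro j; rw [hu', pd1]
    simp only [h1, h2, hX]
    have hs : ∑ i : Fin n, Real.exp (x e0) * ((Pi.single i (1:ℝ) : Fin n → ℝ) e0)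
        * ((Pi.single i (1:ℝ) : Fin n → ℝ) e0) = Real.exp (x e0) := by
      rw [Finset.sum_eq_single e0]
      · simp
      · intro b _ hb; simp [Pi.single_apply, (Ne.symm hb)]
      · simp
    have hs2 : ∑ j : Fin n, ((Pi.single e0 (1:ℝ) : Fin n → ℝ) j)
        * (Real.exp (x e0) * ((Pi.single j (1:ℝ) : Fin n → ℝ) e0)) = Real.exp (x e0) := by
      rw [Finset.sum_eq_single e0]
      · simp
      · intro b _ hb; simp [Pi.single_apply, hb]
      · simp
    rw [hs, hs2, sub_self]
  · intro x i j
    have hzero : ∀ (k l : Fin n), partialDeriv (fun y => X y k) l x = 0 := by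
      intro k l
      have : (fun y => X y k) = fun _ : Fin n → ℝ => (Pi.single e0 (1:ℝ) : Fin n → ℝ) k := by
        funext y; rw [hX]
      rw [partialDeriv, this, fderiv_fun_const]
      simp
    rw [hzero, hzero, add_zero]
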